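/- Let E be a sup-reflexive normed space (every f ∈ E' attains its supremum on the closed unit ball Γ_E), ϑ > 0, and (a_n, f_n) an extended ϑ-triangular sequence of E with extensions f̃_n ∈ Γ_{E'}. Then no convex block sequence of (f̃_n) converges pointwise on E. -/

import Mathlib

open Filter

/-- A countable convex combination of elements of a closed convex set lies in the set. -/
private lemma aux_tsum_mem {D : Type*} [NormedAddCommGroup D] [NormedSpace ℝ D]
    {S : Set D} (hSc : Convex ℝ S) (hScl : IsClosed S) {x : ℕ → D} (hx : ∀ k, x k ∈ S)
    {w : ℕ → ℝ} (hw0 : ∀ k, 0 ≤ w k) (hw1 : HasSum w 1)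
    (hsum : Summable fun k => w k • x k) : (∑' k, w k • x k) ∈ S := by
  have hP := hsum.hasSum.tendsto_sum_nat
  have hμ := hw1.tendsto_sum_nat
  have hμinv : Tendsto (fun n => (∑ k ∈ Finset.range n, w k)⁻¹) atTop (nhds 1) := by
    simpa using hμ.inv₀ one_ne_zero
  have hT : Tendsto (fun n => (∑ k ∈ Finset.range n, w k)⁻¹ • ∑ k ∈ Finset.range n, w k • x k)
      atTop (nhds (∑' k, w k • x k)) := by
    simpa using hμinv.smul hP
  refine hScl.mem_of_tendsto hT ?_
  have hev : ∀ᶠ n in atTop, (0:ℝ) < ∑ k ∈ Finset.range n, w k :=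
    hμ.eventually (eventually_gt_nhds one_pos)
  filter_upwards [hev] with n hn
  have hmem : ∑ k ∈ Finset.range n,
      ((∑ j ∈ Finset.range n, w j)⁻¹ * w k) • x k ∈ S := by
    refine hSc.sum_mem (fun k _ => mul_nonneg (inv_nonneg.mpr (le_of_lt hn)) (hw0 k)) ?_
      (fun k _ => hx k)
    rw [← Finset.mul_sum]
    exact inv_mul_cancel₀ hn.ne'
  have : (∑ j ∈ Finset.range n, w j)⁻¹ • ∑ k ∈ Finset.range n, w k • x k
      = ∑ k ∈ Finset.range n, ((∑ j ∈ Finset.range n, w j)⁻¹ * w k) • x k := by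
    rw [Finset.smul_sum]
    exact Finset.sum_congr rfl fun k _ => (smul_smul _ _ _)
  rw [this]; exact hmem

/-- Recursive construction of partial sums for the Simons argument. -/
private noncomputable def buildU {D : Type*} [NormedAddCommGroup D] [NormedSpace ℝ D]
    (g : ℕ → D → D) : ℕ → D
  | 0 => 0
  | (k+1) => buildU g k + ((2:ℝ)⁻¹)^(k+1) • g k (buildU g k)

set_option maxHeartbeats 2000000 in
/-- In a sup-reflexive space, no convex block sequence of the extensions of a
`ϑ`-triangular sequence converges pointwise. -/
theorem no_convex_block_pointwise_convergent {E : Type*}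
    [NormedAddCommGroup E] [NormedSpace ℝ E]
    (hsup : ∀ f : E →L[ℝ] ℝ, ∃ x : E, ‖x‖ ≤ 1 ∧ ∀ y : E, ‖y‖ ≤ 1 → f y ≤ f x)
    (ϑ : ℝ) (hϑ : 0 < ϑ) (a : ℕ → E) (ftilde : ℕ → E →L[ℝ] ℝ)
    (ha : ∀ n, ‖a n‖ ≤ 1) (hf : ∀ n, ‖ftilde n‖ ≤ 1)
    (htri0 : ∀ n i, i < n → ftilde n (a i) = 0)
    (htriϑ : ∀ n i, n ≤ i → ϑ ≤ ftilde n (a i)) :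
    ¬ ∃ (F : ℕ → Finset ℕ) (lam : ℕ → ℝ),
      (Pairwise fun m n => Disjoint (F m) (F n)) ∧
      (∀ i, 0 ≤ lam i) ∧
      (∀ n, ∑ i ∈ F n, lam i = 1) ∧
      (∀ x : E, ∃ l : ℝ,
        Tendsto (fun n => (∑ i ∈ F n, lam i • ftilde i) x) atTop (nhds l)) := by
  rintro ⟨F, lam, hdisj, hlam0, hsum1, hconv⟩
  classical
  -- the block functionals
  set c : ℕ → E →L[ℝ] ℝ := fun n => ∑ i ∈ F n, lam i • ftilde i with hc_def
  have hcapp : ∀ n x, c n x = ∑ i ∈ F n, lam i * ftilde i x := by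
    intro n x
    simp [hc_def, ContinuousLinearMap.sum_apply, ContinuousLinearMap.smul_apply, smul_eq_mul]
  have hcnorm : ∀ n, ‖c n‖ ≤ 1 := by
    intro n
    calc ‖c n‖ ≤ ∑ i ∈ F n, ‖lam i • ftilde i‖ := norm_sum_le _ _
    _ ≤ ∑ i ∈ F n, lam i := by
        refine Finset.sum_le_sum fun i _ => ?_
        refine (norm_smul_le (lam i) (ftilde i)).trans ?_
        rw [Real.norm_eq_abs, abs_of_nonneg (hlam0 i)]
        exact mul_le_of_le_one_right (hlam0 i) (hf i)
    _ = 1 := hsum1 n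
  -- the pointwise limit functional g
  choose L hL using hconv
  have hL' : ∀ x, Tendsto (fun n => c n x) atTop (nhds (L x)) := hL
  have hLadd : ∀ x y, L (x + y) = L x + L y := by
    intro x y
    refine tendsto_nhds_unique (hL' (x + y)) ?_
    have : (fun n => c n (x + y)) = fun n => c n x + c n y := by
      funext n; exact map_add (c n) x y
    rw [this]
    exact (hL' x).add (hL' y)
  have hLsmul : ∀ (r : ℝ) (x : E), L (r • x) = r * L x := by
    intro r x
    refine tendsto_nhds_unique (hL' (r • x)) ?_
    have : (fun n => c n (r • x)) = fun n => r * c n x := by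
      funext n; simp [map_smul]
    rw [this]
    exact (hL' x).const_mul r
  have hLbound : ∀ x, ‖L x‖ ≤ 1 * ‖x‖ := by
    intro x
    have hnorm : Tendsto (fun n => ‖c n x‖) atTop (nhds ‖L x‖) := (hL' x).norm
    refine le_of_tendsto hnorm (Eventually.of_forall fun n => ?_)
    calc ‖c n x‖ ≤ ‖c n‖ * ‖x‖ := (c n).le_opNorm x
    _ ≤ 1 * ‖x‖ := mul_le_mul_of_nonneg_right (hcnorm n) (norm_nonneg x)
  set g : E →L[ℝ] ℝ := LinearMap.mkContinuous
    { toFun := L, map_add' := hLadd,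
      map_smul' := by intro r x; simpa using hLsmul r x } 1 hLbound with hg_def
  have hgapp : ∀ x, g x = L x := fun x => rfl
  have hgnorm : ‖g‖ ≤ 1 := LinearMap.mkContinuous_norm_le _ zero_le_one _
  -- basic positivity facts
  have hfnonneg : ∀ j i, 0 ≤ ftilde j (a i) := by
    intro j i
    rcases lt_or_ge i j with h | h
    · rw [htri0 j i h]
    · exact le_trans hϑ.le (htriϑ j i h)
  have hcpos : ∀ n i, 0 ≤ c n (a i) := by
    intro n i
    rw [hcapp]
    exact Finset.sum_nonneg fun j _ => mul_nonneg (hlam0 j) (hfnonneg j i)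
  have hFne : ∀ n, (F n).Nonempty := by
    intro n
    by_contra h
    rw [Finset.not_nonempty_iff_eq_empty] at h
    have := hsum1 n
    rw [h] at this
    simp at this
  have hcbig : ∀ n i, (F n).max' (hFne n) ≤ i → ϑ ≤ c n (a i) := by
    intro n i hi
    have h1 : ∑ j ∈ F n, lam j * ϑ ≤ ∑ j ∈ F n, lam j * ftilde j (a i) :=
      Finset.sum_le_sum fun j hj =>
        mul_le_mul_of_nonneg_left (htriϑ j i (le_trans (Finset.le_max' _ j hj) hi)) (hlam0 j)
    have h2 : ∑ j ∈ F n, lam j * ϑ = ϑ := by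
      rw [← Finset.sum_mul, hsum1 n, one_mul]
    rw [hcapp]
    linarith
  -- g vanishes on the aᵢ
  have hgzero : ∀ i, g (a i) = 0 := by
    intro i
    have hfin : Finite {n : ℕ | ∃ j ∈ F n, j ≤ i} := by
      have hinj : Function.Injective
          (fun p : {n : ℕ | ∃ j ∈ F n, j ≤ i} => (⟨p.2.choose,
            Nat.lt_succ_of_le p.2.choose_spec.2⟩ : Fin (i+1))) := by
        intro p q hpq
        have h1 : p.2.choose ∈ F p.1 := p.2.choose_spec.1
        have h2 : q.2.choose ∈ F q.1 := q.2.choose_spec.1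
        have heq : p.2.choose = q.2.choose := congrArg Fin.val hpq
        rw [heq] at h1
        ext
        by_contra hne
        exact (Finset.disjoint_left.mp (hdisj hne)) h1 h2
      exact Finite.of_injective _ hinj
    have hfin' : {n : ℕ | ∃ j ∈ F n, j ≤ i}.Finite := Set.toFinite _
    obtain ⟨N, hN⟩ := hfin'.bddAbove
    have hev : ∀ᶠ n in atTop, c n (a i) = 0 := by
      filter_upwards [eventually_gt_atTop N] with n hn
      rw [hcapp]
      refine Finset.sum_eq_zero fun j hj => ?_
      have hji : i < j := by
        by_contra h
        push_neg at h
        exact absurd (hN ⟨j, hj, h⟩) (not_le.mpr hn)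
      rw [htri0 j i hji, mul_zero]
    have : Tendsto (fun n => c n (a i)) atTop (nhds 0) :=
      Tendsto.congr' (by filter_upwards [hev] with n h using h.symm) tendsto_const_nhds
    rw [hgapp]
    exact tendsto_nhds_unique (hL' (a i)) this
  -- the differences
  set hh : ℕ → E →L[ℝ] ℝ := fun n => c n - g with hh_def
  have hhnorm : ∀ n, ‖hh n‖ ≤ 2 := by
    intro n
    calc ‖hh n‖ ≤ ‖c n‖ + ‖g‖ := norm_sub_le _ _
    _ ≤ 2 := by linarith [hcnorm n, hgnorm]
  have hhai : ∀ n i, hh n (a i) = c n (a i) := by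
    intro n i
    simp [hh_def, hgzero i]
  have hhlim : ∀ x, Tendsto (fun n => hh n x) atTop (nhds 0) := by
    intro x
    have : Tendsto (fun n => c n x - L x) atTop (nhds (L x - L x)) :=
      (hL' x).sub tendsto_const_nhds
    rw [sub_self] at this
    simpa [hh_def, hgapp] using this
  -- the convex sets
  set Cs : ℕ → Set (E →L[ℝ] ℝ) := fun k => closure (convexHull ℝ (hh '' Set.Ici k))
    with hCs_def
  have hCconv : ∀ k, Convex ℝ (Cs k) := fun k => (convex_convexHull ℝ _).closure
  have hCmem : ∀ k n, k ≤ n → hh n ∈ Cs k := fun k n hkn =>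
    subset_closure (subset_convexHull ℝ _ ⟨n, hkn, rfl⟩)
  have hCanti : ∀ k m, k ≤ m → Cs m ⊆ Cs k := fun k m h =>
    closure_mono (convexHull_mono (Set.image_mono (Set.Ici_subset_Ici.mpr h)))
  have hCsub : ∀ (k) (T : Set (E →L[ℝ] ℝ)), IsClosed T → Convex ℝ T →
      (∀ n, k ≤ n → hh n ∈ T) → Cs k ⊆ T := by
    intro k T hTcl hTconv hTmem
    refine closure_minimal (convexHull_min ?_ hTconv) hTcl
    rintro _ ⟨n, hn, rfl⟩
    exact hTmem n hn
  have hevalcont : ∀ z : E, Continuous fun w : E →L[ℝ] ℝ => w z :=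
    fun z => (ContinuousLinearMap.apply ℝ ℝ z).continuous
  have hCnorm : ∀ k w, w ∈ Cs k → ‖w‖ ≤ 2 := by
    intro k w hw
    have : Cs k ⊆ Metric.closedBall 0 2 := by
      refine hCsub k _ Metric.isClosed_closedBall (convex_closedBall _ _) fun n _ => ?_
      rw [Metric.mem_closedBall, dist_zero_right]
      exact hhnorm n
    have := this hw
    rwa [Metric.mem_closedBall, dist_zero_right] at this
  have hCpos : ∀ k w, w ∈ Cs k → ∀ i, 0 ≤ w (a i) := by
    intro k w hw i
    have hcl : IsClosed {u : E →L[ℝ] ℝ | 0 ≤ u (a i)} :=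
      isClosed_le continuous_const (hevalcont (a i))
    have hcv : Convex ℝ {u : E →L[ℝ] ℝ | 0 ≤ u (a i)} := by
      intro x hx y hy s t hs ht hst
      simp only [Set.mem_setOf_eq, ContinuousLinearMap.add_apply,
        ContinuousLinearMap.coe_smul', Pi.smul_apply, smul_eq_mul] at *
      nlinarith
    exact hCsub k _ hcl hcv (fun n _ => by
      simp only [Set.mem_setOf_eq, hhai]
      exact hcpos n i) hw
  have hCev : ∀ k w, w ∈ Cs k → ∀ᶠ i in atTop, ϑ/2 ≤ w (a i) := by
    intro k w hw
    obtain ⟨v, hvmem, hdist⟩ := Metric.mem_closure_iff.mp hw (ϑ/2) (half_pos hϑ)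
    have hvT : v ∈ {u : E →L[ℝ] ℝ | ∀ᶠ i in atTop, ϑ ≤ u (a i)} := by
      refine convexHull_min ?_ ?_ hvmem
      · rintro _ ⟨n, _, rfl⟩
        rw [Set.mem_setOf_eq, eventually_atTop]
        exact ⟨(F n).max' (hFne n), fun i hi => by rw [hhai]; exact hcbig n i hi⟩
      · intro x hx y hy s t hs ht hst
        rw [Set.mem_setOf_eq]
        filter_upwards [hx, hy] with i h1 h2
        simp only [ContinuousLinearMap.add_apply, ContinuousLinearMap.coe_smul',
          Pi.smul_apply, smul_eq_mul]
        nlinarith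
    filter_upwards [hvT] with i hi
    have h1 : |(w - v) (a i)| ≤ ‖w - v‖ * ‖a i‖ := by
      rw [← Real.norm_eq_abs]; exact (w - v).le_opNorm (a i)
    have h2 : ‖w - v‖ * ‖a i‖ ≤ ϑ/2 := by
      rw [← dist_eq_norm] at *
      calc dist w v * ‖a i‖ ≤ dist w v * 1 :=
        mul_le_mul_of_nonneg_left (ha i) dist_nonneg
      _ ≤ ϑ/2 := by rw [mul_one]; exact hdist.le
    have h3 : w (a i) = v (a i) + (w - v) (a i) := by
      simp
    have := abs_le.mp (h1.trans h2)
    linarith [this.1]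
  -- the near-minimizing recursion
  set ε : ℝ := ϑ/8 with hε_def
  have hεpos : 0 < ε := by positivity
  set δ : ℕ → ℝ := fun k => ε * (((2:ℝ)⁻¹)^(k+1) * ((2:ℝ)⁻¹)^(k+1)) with hδ_def
  have hδpos : ∀ k, 0 < δ k := by intro k; positivity
  have hchoice : ∀ (k : ℕ) (v : E →L[ℝ] ℝ), ∃ ξ ∈ Cs k, ∀ η ∈ Cs k,
      ‖v + ((2:ℝ)⁻¹)^(k+1) • ξ‖ ≤ ‖v + ((2:ℝ)⁻¹)^(k+1) • η‖ + δ k := by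
    intro k v
    set A := (fun η => ‖v + ((2:ℝ)⁻¹)^(k+1) • η‖) '' Cs k with hA_def
    have hAne : A.Nonempty := ⟨_, ⟨hh k, hCmem k k le_rfl, rfl⟩⟩
    obtain ⟨r, hrA, hr⟩ := Real.lt_sInf_add_pos hAne (hδpos k)
    obtain ⟨ξ, hξ, rfl⟩ := hrA
    refine ⟨ξ, hξ, fun η hη => ?_⟩
    have hbdd : BddBelow A := ⟨0, by rintro _ ⟨u, _, rfl⟩; exact norm_nonneg _⟩
    have : sInf A ≤ ‖v + ((2:ℝ)⁻¹)^(k+1) • η‖ := csInf_le hbdd ⟨η, hη, rfl⟩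
    linarith
  choose! stepf hstep1 hstep2 using hchoice
  set u : ℕ → E →L[ℝ] ℝ := buildU stepf with hu_def
  set ξ : ℕ → E →L[ℝ] ℝ := fun k => stepf k (u k) with hξ_def
  have hu0 : u 0 = 0 := rfl
  have huS : ∀ k, u (k+1) = u k + ((2:ℝ)⁻¹)^(k+1) • ξ k := fun k => rfl
  have hξmem : ∀ k, ξ k ∈ Cs k := fun k => hstep1 k (u k)
  have hξmin : ∀ k, ∀ η ∈ Cs k,
      ‖u (k+1)‖ ≤ ‖u k + ((2:ℝ)⁻¹)^(k+1) • η‖ + δ k := by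
    intro k η hη
    rw [huS k]
    exact hstep2 k (u k) η hη
  -- the series U
  have hsummable : Summable (fun k => ((2:ℝ)⁻¹)^(k+1) • ξ k) := by
    refine Summable.of_norm_bounded (g := fun k => ((2:ℝ)⁻¹)^k * 2) ?_ ?_
    · exact (summable_geometric_of_lt_one (by norm_num) (by norm_num)).mul_right 2
    · intro k
      refine (norm_smul_le (((2:ℝ)⁻¹)^(k+1)) (ξ k)).trans ?_
      rw [Real.norm_eq_abs, abs_of_nonneg (by positivity : (0:ℝ) ≤ ((2:ℝ)⁻¹)^(k+1))]
      have h1 : ‖ξ k‖ ≤ 2 := hCnorm k _ (hξmem k)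
      have h2 : ((2:ℝ)⁻¹)^(k+1) = ((2:ℝ)⁻¹)^k * 2⁻¹ := pow_succ _ _
      nlinarith [pow_nonneg (by norm_num : (0:ℝ) ≤ 2⁻¹) k]
  set U : E →L[ℝ] ℝ := ∑' k, ((2:ℝ)⁻¹)^(k+1) • ξ k with hU_def
  have hpart : ∀ K, ∑ k ∈ Finset.range K, ((2:ℝ)⁻¹)^(k+1) • ξ k = u K := by
    intro K
    induction K with
    | zero => simp [hu0]
    | succ K ih => rw [Finset.sum_range_succ, ih, huS K]
  have htail : ∀ K, U - u K = ∑' k, ((2:ℝ)⁻¹)^(k+K+1) • ξ (k+K) := by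
    intro K
    have := Summable.sum_add_tsum_nat_add (f := fun k => ((2:ℝ)⁻¹)^(k+1) • ξ k) K hsummable
    rw [hpart K] at this
    rw [hU_def, ← this]
    abel
  -- membership of the tails
  have hgeo1 : HasSum (fun k : ℕ => ((2:ℝ)⁻¹)^(k+1)) 1 := by
    have h := hasSum_geometric_two
    have h2 := h.mul_left (2:ℝ)⁻¹
    have : (2:ℝ)⁻¹ * 2 = 1 := by norm_num
    rw [this] at h2
    refine h2.congr_fun fun k => ?_
    rw [pow_succ]
    ring
  have hwmem : ∀ K, (2:ℝ)^K • (U - u K) ∈ Cs K := by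
    intro K
    rw [htail K]
    have hsum2 : Summable (fun k => ((2:ℝ)⁻¹)^(k+K+1) • ξ (k+K)) := by
      have := (summable_nat_add_iff (f := fun k => ((2:ℝ)⁻¹)^(k+1) • ξ k) K).mpr hsummable
      simpa using this
    have heq : (2:ℝ)^K • (∑' k, ((2:ℝ)⁻¹)^(k+K+1) • ξ (k+K))
        = ∑' k, ((2:ℝ)⁻¹)^(k+1) • ξ (k+K) := by
      rw [← tsum_const_smul'']
      refine tsum_congr fun k => ?_
      rw [smul_smul]
      congr 1
      have : (k+K+1) = (k+1) + K := by ring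
      rw [this, pow_add, ← mul_assoc, mul_comm ((2:ℝ)^K), mul_assoc, ← mul_pow]
      norm_num
    rw [heq]
    refine aux_tsum_mem (hCconv K) isClosed_closure
      (fun k => hCanti K (k+K) (by omega) (hξmem (k+K)))
      (fun k => by positivity) hgeo1 ?_
    have : Summable (fun k => ((2:ℝ)⁻¹)^(k+1) • ξ (k+K)) := by
      refine Summable.of_norm_bounded (g := fun k => ((2:ℝ)⁻¹)^k * 2) ?_ ?_
      · exact (summable_geometric_of_lt_one (by norm_num) (by norm_num)).mul_right 2
      · intro k
        refine (norm_smul_le (((2:ℝ)⁻¹)^(k+1)) (ξ (k+K))).trans ?_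
        rw [Real.norm_eq_abs, abs_of_nonneg (by positivity : (0:ℝ) ≤ ((2:ℝ)⁻¹)^(k+1))]
        have h1 : ‖ξ (k+K)‖ ≤ 2 := hCnorm _ _ (hξmem (k+K))
        have h2 : ((2:ℝ)⁻¹)^(k+1) = ((2:ℝ)⁻¹)^k * 2⁻¹ := pow_succ _ _
        nlinarith [pow_nonneg (by norm_num : (0:ℝ) ≤ 2⁻¹) k]
    exact this
  -- key inequality (Simons' construction)
  have hLemA : ∀ K, ‖u (K+1)‖ ≤ (‖U‖ + ‖u K‖)/2 + δ K := by
    intro K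
    have hw : (2:ℝ)^(K+1) • (U - u (K+1)) ∈ Cs K :=
      hCanti K (K+1) (Nat.le_succ K) (hwmem (K+1))
    have hη : (2:ℝ)⁻¹ • (ξ K + (2:ℝ)^(K+1) • (U - u (K+1))) ∈ Cs K := by
      have := (hCconv K) (hξmem K) hw (by norm_num : (0:ℝ) ≤ 2⁻¹)
        (by norm_num : (0:ℝ) ≤ 2⁻¹) (by norm_num)
      simpa [smul_add] using this
    have hmin := hξmin K _ hη
    have hident : u K + ((2:ℝ)⁻¹)^(K+1) • ((2:ℝ)⁻¹ • (ξ K + (2:ℝ)^(K+1) • (U - u (K+1))))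
        = (2:ℝ)⁻¹ • (U + u K) := by
      rw [huS K]
      have h2 : ((2:ℝ)⁻¹)^(K+1) * (2:ℝ)^(K+1) = 1 := by rw [← mul_pow]; norm_num
      match_scalars
      · linear_combination (-(2:ℝ)⁻¹) * h2
      · linear_combination (-((2:ℝ)⁻¹)^(K+1) * (2:ℝ)⁻¹) * h2
      · linear_combination ((2:ℝ)⁻¹) * h2
    rw [hident] at hmin
    have : ‖(2:ℝ)⁻¹ • (U + u K)‖ ≤ (‖U‖ + ‖u K‖)/2 := by
      refine (norm_smul_le ((2:ℝ)⁻¹) (U + u K)).trans ?_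
      rw [Real.norm_eq_abs, abs_of_nonneg (by norm_num : (0:ℝ) ≤ (2:ℝ)⁻¹)]
      have := norm_add_le U (u K)
      linarith
    linarith
  -- the inductive estimate
  have hind : ∀ K, ‖U‖ - ε * (1 - ((2:ℝ)⁻¹)^K) ≤ (2:ℝ)^K * (‖U‖ - ‖u K‖) := by
    intro K
    induction K with
    | zero => simp [hu0]
    | succ K ih =>
      have hA := hLemA K
      have hp : (0:ℝ) < (2:ℝ)^(K+1) := by positivity
      have e1 : (2:ℝ)^(K+1) * ((‖U‖ - ‖u K‖)/2 - δ K) ≤ (2:ℝ)^(K+1) * (‖U‖ - ‖u (K+1)‖) := by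
        refine mul_le_mul_of_nonneg_left ?_ hp.le
        linarith
      have h2 : ((2:ℝ))^(K+1) * (((2:ℝ)⁻¹)^(K+1) * ((2:ℝ)⁻¹)^(K+1)) = ((2:ℝ)⁻¹)^(K+1) := by
        rw [← mul_assoc, ← mul_pow]
        norm_num
      have e2 : (2:ℝ)^(K+1) * ((‖U‖ - ‖u K‖)/2 - δ K)
          = (2:ℝ)^K * (‖U‖ - ‖u K‖) - ε * ((2:ℝ)⁻¹)^(K+1) := by
        rw [hδ_def]
        linear_combination (-ε) * h2
      have hq2 : ε * ((2:ℝ)⁻¹)^K = 2 * (ε * ((2:ℝ)⁻¹)^(K+1)) := by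
        rw [pow_succ]; ring
      nlinarith [ih, e1, e2, hq2]
  -- the norm-attaining point
  obtain ⟨b, hb1, hbsup⟩ := hsup U
  have hUb0 : 0 ≤ U b := by
    have h0 := hbsup 0 (by simp)
    simpa using h0
  have hUnorm : ‖U‖ = U b := by
    refine le_antisymm ?_ ?_
    · refine ContinuousLinearMap.opNorm_le_bound _ hUb0 fun x => ?_
      by_cases hx : x = 0
      · simp [hx]
      · have hxn : 0 < ‖x‖ := norm_pos_iff.mpr hx
        have hy1 : ‖‖x‖⁻¹ • x‖ ≤ 1 := by
          rw [norm_smul, Real.norm_eq_abs, abs_of_nonneg (inv_nonneg.mpr hxn.le),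
            inv_mul_cancel₀ hxn.ne']
        have h1 : U (‖x‖⁻¹ • x) ≤ U b := hbsup _ hy1
        have h2 : U (-(‖x‖⁻¹ • x)) ≤ U b := hbsup _ (by rwa [norm_neg])
        rw [map_smul, smul_eq_mul] at h1
        rw [map_neg, map_smul, smul_eq_mul] at h2
        have hinv : ‖x‖ * ‖x‖⁻¹ = 1 := mul_inv_cancel₀ hxn.ne'
        have h1' : U x ≤ U b * ‖x‖ := by
          have h3 := mul_le_mul_of_nonneg_left h1 hxn.le
          calc U x = ‖x‖ * (‖x‖⁻¹ * U x) := by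
                rw [← mul_assoc, hinv, one_mul]
          _ ≤ ‖x‖ * U b := h3
          _ = U b * ‖x‖ := mul_comm _ _
        have h2' : -U x ≤ U b * ‖x‖ := by
          have h3 := mul_le_mul_of_nonneg_left h2 hxn.le
          calc -U x = ‖x‖ * -(‖x‖⁻¹ * U x) := by
                rw [mul_neg, ← mul_assoc, hinv, one_mul]
          _ ≤ ‖x‖ * U b := h3
          _ = U b * ‖x‖ := mul_comm _ _
        rw [Real.norm_eq_abs, abs_le]
        constructor
        · linarith
        · linarith
    · calc U b ≤ |U b| := le_abs_self _
      _ ≤ ‖U‖ * ‖b‖ := by rw [← Real.norm_eq_abs]; exact U.le_opNorm b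
      _ ≤ ‖U‖ := mul_le_of_le_one_right (norm_nonneg _) hb1
  -- lower bound for ‖U‖
  have hUa : ∀ i, U (a i) ≤ ‖U‖ := by
    intro i
    calc U (a i) ≤ |U (a i)| := le_abs_self _
    _ ≤ ‖U‖ * ‖a i‖ := by rw [← Real.norm_eq_abs]; exact U.le_opNorm (a i)
    _ ≤ ‖U‖ := mul_le_of_le_one_right (norm_nonneg _) (ha i)
  have hUlow : 3*ϑ/8 ≤ ‖U‖ := by
    obtain ⟨i, hi0, hi1⟩ := ((hCev 0 (ξ 0) (hξmem 0)).and (hCev 1 (ξ 1) (hξmem 1))).exists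
    have hw2 : 0 ≤ ((2:ℝ)^2 • (U - u 2)) (a i) := hCpos 2 _ (hwmem 2) i
    have hw2' : 0 ≤ (U - u 2) (a i) := by
      have h4 : ((2:ℝ)^2 • (U - u 2)) (a i) = 4 * (U - u 2) (a i) := by
        rw [ContinuousLinearMap.smul_apply]; norm_num
      rw [h4] at hw2
      linarith
    have hu2 : u 2 = ((2:ℝ)⁻¹)^1 • ξ 0 + ((2:ℝ)⁻¹)^2 • ξ 1 := by
      have h0 := huS 0
      have h1 := huS 1
      rw [h1, h0, hu0, zero_add]
    have hu2i : (3*ϑ/8 : ℝ) ≤ u 2 (a i) := by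
      rw [hu2]
      simp only [ContinuousLinearMap.add_apply, ContinuousLinearMap.smul_apply, smul_eq_mul]
      nlinarith
    have hUi : 3*ϑ/8 ≤ U (a i) := by
      have hsub : (U - u 2) (a i) = U (a i) - u 2 (a i) := by simp
      rw [hsub] at hw2'
      linarith
    exact hUi.trans (hUa i)
  -- the final contradiction
  obtain ⟨K, hK⟩ : ∃ K, ∀ n ≥ K, hh n b ≤ ε := by
    have := (hhlim b).eventually (eventually_le_nhds hεpos)
    exact eventually_atTop.mp this
  have hwKb : ((2:ℝ)^K • (U - u K)) b ≤ ε := by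
    have hsubset : Cs K ⊆ {w : E →L[ℝ] ℝ | w b ≤ ε} := by
      refine hCsub K _ (isClosed_le (hevalcont b) continuous_const) ?_ fun n hn => hK n hn
      intro x hx y hy s t hs ht hst
      simp only [Set.mem_setOf_eq, ContinuousLinearMap.add_apply,
        ContinuousLinearMap.coe_smul', Pi.smul_apply, smul_eq_mul] at *
      nlinarith
    exact hsubset (hwmem K)
  have huKb : u K b ≤ ‖u K‖ := by
    calc u K b ≤ |u K b| := le_abs_self _
    _ ≤ ‖u K‖ * ‖b‖ := by rw [← Real.norm_eq_abs]; exact (u K).le_opNorm b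
    _ ≤ ‖u K‖ := mul_le_of_le_one_right (norm_nonneg _) hb1
  have hlow : ‖U‖ - ε ≤ ((2:ℝ)^K • (U - u K)) b := by
    have h1 : ((2:ℝ)^K • (U - u K)) b = (2:ℝ)^K * (U b - u K b) := by
      simp
    have h2 : (2:ℝ)^K * (‖U‖ - ‖u K‖) ≤ (2:ℝ)^K * (U b - u K b) := by
      refine mul_le_mul_of_nonneg_left ?_ (by positivity)
      rw [← hUnorm]
      linarith
    have h3 := hind K
    have h4 : ε * (1 - ((2:ℝ)⁻¹)^K) ≤ ε := by
      have : (0:ℝ) ≤ ((2:ℝ)⁻¹)^K := by positivity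
      nlinarith
    rw [h1]
    linarith
  linarith [hwKb, hlow, hUlow, hε_def]
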